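/- Let Γ be a finite connected cubic graph, G ≤ Aut(Γ) vertex-transitive, and N ⊴ G such that the quotient graph Γ/N (whose vertices are the N-orbits, with two distinct orbits adjacent iff some vertex of one is adjacent in Γ to some vertex of the other) is also cubic. Then N acts semiregularly on the vertices of Γ. -/
import Mathlib


/-- If the quotient of a finite connected cubic graph by the orbits of a normal subgroup
`N` of a vertex-transitive automorphism group is again cubic, then `N` acts semiregularly
on the vertices. -/
theorem stmt14 {V : Type*} [Fintype V] (Γ : SimpleGraph V) (hconn : Γ.Connected)
    (hcubic : ∀ v : V, (Γ.neighborSet v).ncard = 3)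
    (G N : Subgroup (Equiv.Perm V))
    (hG : ∀ g ∈ G, ∀ u w : V, Γ.Adj (g u) (g w) ↔ Γ.Adj u w)
    (htrans : ∀ u w : V, ∃ g ∈ G, g u = w)
    (hNG : N ≤ G) (hnorm : ∀ g ∈ G, ∀ n ∈ N, g * n * g⁻¹ ∈ N)
    (Δ : SimpleGraph (Quotient (MulAction.orbitRel N V)))
    (hΔ : ∀ A B : Quotient (MulAction.orbitRel N V), Δ.Adj A B ↔
      A ≠ B ∧ ∃ a b : V, Quotient.mk (MulAction.orbitRel N V) a = A ∧
        Quotient.mk (MulAction.orbitRel N V) b = B ∧ Γ.Adj a b)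
    (hΔcubic : ∀ A : Quotient (MulAction.orbitRel N V), (Δ.neighborSet A).ncard = 3) :
    ∀ n ∈ N, ∀ v : V, n v = v → n = 1 := by
  classical
  set q : V → Quotient (MulAction.orbitRel N V) := Quotient.mk (MulAction.orbitRel N V)
    with hq
  -- N elements preserve orbits
  have hqn : ∀ m ∈ N, ∀ w : V, q (m w) = q w := by
    intro m hm w
    exact Quotient.sound ⟨⟨m, hm⟩, rfl⟩
  -- key structural lemma at every vertex
  have key : ∀ u : V, Set.InjOn q (Γ.neighborSet u) := by
    intro u
    have hsub1 : Δ.neighborSet (q u) ⊆ q '' Γ.neighborSet u := by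
      rintro B hB
      obtain ⟨hne, a, b, ha, hb, hab⟩ := (hΔ (q u) B).mp hB
      obtain ⟨⟨m, hm⟩, rfl⟩ := Quotient.exact ha
      refine ⟨m⁻¹ b, ?_, ?_⟩
      · have := (hG m⁻¹ (hNG (inv_mem hm)) (m • u) b).mpr hab
        simpa [Equiv.Perm.smul_def] using this
      · rw [← hb]
        exact hqn m⁻¹ (inv_mem hm) b
    have hsub2 : q '' Γ.neighborSet u ⊆ insert (q u) (Δ.neighborSet (q u)) := by
      rintro B ⟨w, hw, rfl⟩
      by_cases h : q w = q u
      · exact h ▸ Set.mem_insert _ _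
      · right
        exact (hΔ (q u) (q w)).mpr ⟨Ne.symm h, u, w, rfl, rfl, hw⟩
    have hfin : (Γ.neighborSet u).Finite := Set.toFinite _
    have hle : (q '' Γ.neighborSet u).ncard ≤ 3 := by
      rw [← hcubic u]; exact Set.ncard_image_le hfin
    have hge : 3 ≤ (q '' Γ.neighborSet u).ncard := by
      rw [← hΔcubic (q u)]
      exact Set.ncard_le_ncard hsub1 (hfin.image q)
    have hcard : (q '' Γ.neighborSet u).ncard = 3 := le_antisymm hle hge
    exact Set.injOn_of_ncard_image_eq (by rw [hcard, hcubic u]) hfin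
  intro n hn v hv
  -- fixing a vertex forces fixing its neighbours
  have step : ∀ u w : V, n u = u → Γ.Adj u w → n w = w := by
    intro u w hu huw
    have h1 : n w ∈ Γ.neighborSet u := by
      have := (hG n (hNG hn) u w).mpr huw
      rwa [hu] at this
    exact key u h1 huw (hqn n hn w)
  have walkfix : ∀ u x : V, Γ.Walk u x → n u = u → n x = x := by
    intro u x p
    induction p with
    | nil => exact id
    | cons h p ih => exact fun hu => ih (step _ _ hu h)
  have hfixall : ∀ x : V, n x = x := by
    intro x
    obtain ⟨p⟩ := hconn.preconnected v x
    exact walkfix v x p hv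
  ext x
  exact hfixall x
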